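/- arXiv:0712.2480 — 2 statements merged into one kernel-verified Lean document; each statement's English description precedes it below -/
import Mathlib

section
/- Let $\{\pi_j\}_{j\ge 0}$ be a probability distribution on nonnegative integers with $\pi_0>0$ and mean $\gamma_1=\sum_j j\pi_j < 1$. Let $\{Q_k\}$ satisfy $Q_0>0$ and $Q_k=\sum_{j=0}^k \pi_j Q_{k-j+1}$. Then $\lim_{k\to\infty} Q_k = Q_0/(1-\gamma_1)$. -/
open Filter Finset

/-- Takács' theorem, subcritical case: if the mean `γ₁ = ∑ j·π_j < 1`, then
`Q_k → Q₀ / (1 - γ₁)`. -/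
theorem stmt_1 (pi Q : ℕ → ℝ)
    (hpos : ∀ j, 0 ≤ pi j) (hpi0 : 0 < pi 0) (hsum : HasSum pi 1)
    (hmom : Summable (fun j : ℕ => (j : ℝ) * pi j))
    (hγ1 : (∑' j : ℕ, (j : ℝ) * pi j) < 1)
    (hQ0 : 0 < Q 0)
    (hrec : ∀ k, Q k = ∑ j ∈ Finset.range (k + 1), pi j * Q (k - j + 1)) :
    Tendsto Q atTop (nhds (Q 0 / (1 - ∑' j : ℕ, (j : ℝ) * pi j))) := by
  set γ : ℝ := ∑' j : ℕ, (j : ℝ) * pi j with hγdef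
  have hγ0 : 0 ≤ γ := tsum_nonneg (fun j => mul_nonneg (Nat.cast_nonneg j) (hpos j))
  have h1γ : 0 < 1 - γ := by linarith
  set ρ : ℕ → ℝ := fun t => 1 - ∑ j ∈ range (t + 1), pi j with hρdef
  have hpartial : ∀ n, ∑ j ∈ range n, pi j ≤ 1 := fun n =>
    sum_le_hasSum (range n) (fun j _ => hpos j) hsum
  have hρnn : ∀ t, 0 ≤ ρ t := fun t => by
    have := hpartial (t + 1); simp only [hρdef]; linarith
  have hρstep : ∀ t, ρ (t + 1) + pi (t + 1) = ρ t := by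
    intro t
    simp only [hρdef]
    rw [sum_range_succ]
    ring
  have hρ0 : ρ 0 = 1 - pi 0 := by simp [hρdef]
  have hpi0le : pi 0 ≤ 1 := by have := hpartial 1; simpa using this
  -- Key identity
  have key : ∀ n, pi 0 * Q (n + 1) = Q 0 + ∑ t ∈ range n, ρ (t + 1) * Q (n - t) := by
    intro n
    induction n with
    | zero => have := hrec 0; simp at this ⊢; linarith
    | succ n ih =>
      have hr := hrec (n + 1)
      rw [sum_range_succ'] at hr
      -- hr : Q (n+1) = ∑ i ∈ range (n+1), pi (i+1) * Q (n+1-(i+1)+1) + pi 0 * Q (n+1-0+1)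
      have hidx : ∀ i ∈ range (n + 1), pi (i + 1) * Q (n + 1 - (i + 1) + 1)
          = pi (i + 1) * Q (n - i + 1) := by
        intro i hi
        congr 2
        omega
      rw [Finset.sum_congr rfl hidx] at hr
      simp only [Nat.sub_zero] at hr
      -- target sum manipulation
      have hgoal : ∑ t ∈ range (n + 1), ρ (t + 1) * Q (n + 1 - t)
          = ∑ t ∈ range (n + 1), ρ t * Q (n - t + 1)
            - ∑ t ∈ range (n + 1), pi (t + 1) * Q (n - t + 1) := by
        rw [← Finset.sum_sub_distrib]
        refine Finset.sum_congr rfl fun t ht => ?_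
        have h1 : n + 1 - t = n - t + 1 := by
          have := Finset.mem_range.1 ht; omega
        rw [h1, ← hρstep t]
        ring
      have hshift : ∑ t ∈ range (n + 1), ρ t * Q (n - t + 1)
          = ∑ i ∈ range n, ρ (i + 1) * Q (n - i) + ρ 0 * Q (n + 1) := by
        rw [sum_range_succ' (fun t => ρ t * Q (n - t + 1)) n]
        have : n - 0 + 1 = n + 1 := by omega
        rw [this]
        congr 1
        refine Finset.sum_congr rfl fun i hi => ?_
        have h1 : n - (i + 1) + 1 = n - i := by
          have := Finset.mem_range.1 hi; omega
        rw [h1]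
      rw [hgoal, hshift, hρ0]
      linarith [ih, hr]
  -- monotonicity
  have mono : ∀ n, Q n ≤ Q (n + 1) := by
    intro n
    induction n using Nat.strong_induction_on with
    | _ n ih =>
      match n with
      | 0 =>
        have k0 := key 0
        simp at k0
        nlinarith
      | Nat.succ m =>
        have k1 := key (m + 1)
        have k2 := key m
        have hQ1 : 0 ≤ Q 1 := by
          have := ih 0 (by omega); linarith
        rw [sum_range_succ] at k1
        have hsumle : ∑ t ∈ range m, ρ (t + 1) * Q (m - t)
            ≤ ∑ t ∈ range m, ρ (t + 1) * Q (m + 1 - t) := by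
          refine Finset.sum_le_sum fun t ht => ?_
          have htm := Finset.mem_range.1 ht
          have h1 : m + 1 - t = (m - t) + 1 := by omega
          have h2 : Q (m - t) ≤ Q (m - t + 1) := ih (m - t) (by omega)
          rw [h1]
          exact mul_le_mul_of_nonneg_left h2 (hρnn _)
        have hlast : 0 ≤ ρ (m + 1) * Q (m + 1 - m) := by
          have : m + 1 - m = 1 := by omega
          rw [this]
          exact mul_nonneg (hρnn _) hQ1
        nlinarith
  have Qmono : Monotone Q := monotone_nat_of_le_succ mono
  have Qpos : ∀ n, 0 < Q n := fun n => lt_of_lt_of_le hQ0 (Qmono (Nat.zero_le n))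
  -- partial sums of ρ
  have Aform : ∀ n, ∑ t ∈ range n, ρ t
      = ∑ j ∈ range n, (j : ℝ) * pi j + n * (1 - ∑ j ∈ range n, pi j) := by
    intro n
    induction n with
    | zero => simp
    | succ n ih =>
      rw [sum_range_succ, ih, sum_range_succ (fun j => (j : ℝ) * pi j),
        sum_range_succ (f := pi)]
      simp only [hρdef]
      rw [sum_range_succ (f := pi)]
      push_cast
      ring
  have htail_nn : ∀ n, 0 ≤ 1 - ∑ j ∈ range n, pi j := fun n => by
    have := hpartial n; linarith
  have htailbound : ∀ n : ℕ, (n : ℝ) * (1 - ∑ j ∈ range n, pi j)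
      ≤ γ - ∑ j ∈ range n, (j : ℝ) * pi j := by
    intro n
    have h1 : ∑ j ∈ range n, pi j + ∑' j : {j : ℕ // j ∉ range n}, pi j = 1 := by
      exact (Summable.sum_add_tsum_compl (s := range n) hsum.summable).trans hsum.tsum_eq
    have h2 : ∑ j ∈ range n, (j : ℝ) * pi j
        + ∑' j : {j : ℕ // j ∉ range n}, (j : ℝ) * pi (j : ℕ) = γ := by
      exact (Summable.sum_add_tsum_compl (s := range n) hmom)
    have h3 : (n : ℝ) * ∑' j : {j : ℕ // j ∉ range n}, pi j
        ≤ ∑' j : {j : ℕ // j ∉ range n}, (j : ℝ) * pi (j : ℕ) := by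
      rw [← tsum_mul_left]
      refine Summable.tsum_le_tsum (fun j => ?_) ((hsum.summable.subtype _).mul_left _)
        (hmom.subtype _)
      have hj : (n : ℝ) ≤ (j : ℕ) := by
        have := j.2
        simp only [Finset.mem_range, not_lt] at this
        exact_mod_cast this
      exact mul_le_mul_of_nonneg_right hj (hpos _)
    nlinarith [h1, h2, h3]
  have hAle : ∀ n, ∑ t ∈ range n, ρ t ≤ γ := by
    intro n
    rw [Aform n]
    have := htailbound n
    linarith
  have hAge : ∀ n, ∑ j ∈ range n, (j : ℝ) * pi j ≤ ∑ t ∈ range n, ρ t := by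
    intro n
    rw [Aform n]
    have := htail_nn n
    nlinarith [htail_nn n, Nat.cast_nonneg (α := ℝ) n]
  have hAtend : Tendsto (fun n => ∑ t ∈ range n, ρ t) atTop (nhds γ) := by
    refine tendsto_of_tendsto_of_tendsto_of_le_of_le
      (hmom.hasSum.tendsto_sum_nat) tendsto_const_nhds hAge hAle
  -- upper bound
  set C : ℝ := Q 0 / (1 - γ) with hCdef
  have hQleC : ∀ n, Q n ≤ C := by
    intro n
    match n with
    | 0 =>
      rw [hCdef, le_div_iff₀ h1γ]
      nlinarith
    | Nat.succ n =>
      have k := key n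
      have hS : ∑ t ∈ range n, ρ (t + 1) * Q (n - t)
          ≤ (∑ t ∈ range n, ρ (t + 1)) * Q (n + 1) := by
        rw [Finset.sum_mul]
        refine Finset.sum_le_sum fun t ht => ?_
        exact mul_le_mul_of_nonneg_left (Qmono (by omega)) (hρnn _)
      have hSsum : ∑ t ∈ range n, ρ (t + 1) ≤ γ - (1 - pi 0) := by
        have h1 : ∑ t ∈ range (n + 1), ρ t = ∑ t ∈ range n, ρ (t + 1) + ρ 0 :=
          sum_range_succ' ρ n
        have h2 := hAle (n + 1)
        rw [h1, hρ0] at h2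
        linarith
      have hQn1 := (Qpos (n + 1)).le
      have : pi 0 * Q (n + 1) ≤ Q 0 + (γ - (1 - pi 0)) * Q (n + 1) := by
        calc pi 0 * Q (n + 1) = Q 0 + ∑ t ∈ range n, ρ (t + 1) * Q (n - t) := k
          _ ≤ Q 0 + (∑ t ∈ range n, ρ (t + 1)) * Q (n + 1) := by linarith
          _ ≤ Q 0 + (γ - (1 - pi 0)) * Q (n + 1) := by nlinarith
      rw [hCdef, le_div_iff₀ h1γ]
      nlinarith
  have hbdd : BddAbove (Set.range Q) := by
    refine ⟨C, ?_⟩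
    rintro x ⟨n, rfl⟩
    exact hQleC n
  set L : ℝ := ⨆ n, Q n with hLdef
  have hL : Tendsto Q atTop (nhds L) := tendsto_atTop_ciSup Qmono hbdd
  have hLleC : L ≤ C := ciSup_le hQleC
  have hLge0 : 0 < L := lt_of_lt_of_le hQ0 (le_ciSup hbdd 0)
  -- lower bound on L
  have claim : ∀ M : ℕ, Q 0 + (∑ t ∈ range M, ρ (t + 1)) * L ≤ pi 0 * L := by
    intro M
    have hineq : ∀ n, M ≤ n →
        Q 0 + (∑ t ∈ range M, ρ (t + 1)) * Q (n - M) ≤ pi 0 * Q (n + 1) := by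
      intro n hMn
      have k := key n
      have h1 : ∑ t ∈ range M, ρ (t + 1) * Q (n - t)
          ≤ ∑ t ∈ range n, ρ (t + 1) * Q (n - t) := by
        refine Finset.sum_le_sum_of_subset_of_nonneg
          (Finset.range_subset_range.2 hMn) fun t ht _ => ?_
        exact mul_nonneg (hρnn _) (Qpos _).le
      have h2 : (∑ t ∈ range M, ρ (t + 1)) * Q (n - M)
          ≤ ∑ t ∈ range M, ρ (t + 1) * Q (n - t) := by
        rw [Finset.sum_mul]
        refine Finset.sum_le_sum fun t ht => ?_
        have := Finset.mem_range.1 ht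
        exact mul_le_mul_of_nonneg_left (Qmono (by omega)) (hρnn _)
      linarith
    have t1 : Tendsto (fun n : ℕ => Q 0 + (∑ t ∈ range M, ρ (t + 1)) * Q (n - M))
        atTop (nhds (Q 0 + (∑ t ∈ range M, ρ (t + 1)) * L)) := by
      exact (((hL.comp (tendsto_sub_atTop_nat M)).const_mul _).const_add _)
    have t2 : Tendsto (fun n : ℕ => pi 0 * Q (n + 1)) atTop (nhds (pi 0 * L)) := by
      exact (hL.comp (tendsto_add_atTop_nat 1)).const_mul _
    exact le_of_tendsto_of_tendsto t1 t2 (eventually_atTop.2 ⟨M, hineq⟩)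
  have hStend : Tendsto (fun M => ∑ t ∈ range M, ρ (t + 1)) atTop
      (nhds (γ - (1 - pi 0))) := by
    have heq : (fun M => ∑ t ∈ range M, ρ (t + 1))
        = fun M => (∑ t ∈ range (M + 1), ρ t) - ρ 0 := by
      funext M
      rw [sum_range_succ' ρ M]
      ring
    rw [heq, hρ0]
    exact (hAtend.comp (tendsto_add_atTop_nat 1)).sub_const _
  have hfinal : Q 0 + (γ - (1 - pi 0)) * L ≤ pi 0 * L := by
    have t3 : Tendsto (fun M => Q 0 + (∑ t ∈ range M, ρ (t + 1)) * L) atTop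
        (nhds (Q 0 + (γ - (1 - pi 0)) * L)) := (hStend.mul_const _).const_add _
    exact le_of_tendsto t3 (Filter.Eventually.of_forall claim)
  have hCleL : C ≤ L := by
    rw [hCdef, div_le_iff₀ h1γ]
    nlinarith
  have hLC : L = C := le_antisymm hLleC hCleL
  rw [← hLC]
  exact hL
end

section
/- Let $\{\pi_j\}_{j\ge 0}$ be a probability distribution with $\pi_0>0$, mean $\gamma_1=1$, and finite second factorial moment $\gamma_2=\sum_j j(j-1)\pi_j < \infty$. Let $\{Q_k\}$ satisfy $Q_0>0$ and $Q_k=\sum_{j=0}^k \pi_j Q_{k-j+1}$. Then $\lim_{k\to\infty} Q_k/k = 2Q_0/\gamma_2$. -/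
open Filter Finset ENNReal Topology

/-- tail sum -/
noncomputable def tl (f : ℕ → ℝ) (k : ℕ) : ℝ := ∑' i, f (i + k)

lemma tl_eq (f : ℕ → ℝ) (hf : Summable f) (k : ℕ) :
    tl f k = (∑' i, f i) - ∑ i ∈ range k, f i := by
  have := Summable.sum_add_tsum_nat_add k hf
  unfold tl; linarith

lemma tl_nonneg (f : ℕ → ℝ) (hpos : ∀ j, 0 ≤ f j) (k : ℕ) : 0 ≤ tl f k :=
  tsum_nonneg fun i => hpos _

lemma tl_step (f : ℕ → ℝ) (hf : Summable f) (k : ℕ) : tl f k = f k + tl f (k+1) := by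
  unfold tl
  rw [Summable.tsum_eq_zero_add ((summable_nat_add_iff k).2 hf)]
  congr 1
  · simp
  · exact tsum_congr fun i => by rw [show i + 1 + k = i + (k+1) from by omega]

/-- ENNReal Fubini for triangular sums. -/
lemma fub (W F : ℕ → ℝ≥0∞) :
    ∑' j, W j * ∑' i, F (i + (j+1)) = ∑' n, (∑ j ∈ range n, W j) * F n := by
  have h1 : ∀ j : ℕ, W j * ∑' i, F (i + (j+1)) = ∑' n, (if j < n then W j * F n else 0) := by
    intro j
    rw [← ENNReal.tsum_mul_left]
    refine (tsum_eq_tsum_of_ne_zero_bij (fun x => (x : ℕ) + (j+1)) ?_ ?_ ?_).symm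
    · intro a b hab
      exact Subtype.ext (by simpa using hab)
    · intro n hn
      have hjn : j < n := by
        by_contra h
        simp only [Function.mem_support, if_neg h] at hn
        exact hn rfl
      refine ⟨⟨n - (j+1), ?_⟩, ?_⟩
      · simp only [Function.mem_support]
        rw [show n - (j+1) + (j+1) = n from by omega]
        simpa only [Function.mem_support, if_pos hjn] using hn
      · show (n - (j+1)) + (j+1) = n
        omega
    · intro x
      rw [if_pos (by omega : j < (x:ℕ) + (j+1))]
  calc ∑' j, W j * ∑' i, F (i + (j+1)) = ∑' j, ∑' n, (if j < n then W j * F n else 0) := tsum_congr h1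
    _ = ∑' n, ∑' j, (if j < n then W j * F n else 0) := ENNReal.tsum_comm
    _ = ∑' n, ∑ j ∈ range n, W j * F n := by
        refine tsum_congr fun n => ?_
        rw [tsum_eq_sum (s := range n) (fun j hj => if_neg (by simpa using hj))]
        exact Finset.sum_congr rfl fun j hj => if_pos (mem_range.1 hj)
    _ = ∑' n, (∑ j ∈ range n, W j) * F n := by
        exact tsum_congr fun n => (Finset.sum_mul _ _ _).symm

lemma gauss (n : ℕ) : ∑ j ∈ range n, (j:ℝ) = n * ((n:ℝ) - 1) / 2 := by
  induction n with
  | zero => simp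
  | succ n ih =>
    rw [Finset.sum_range_succ, ih]
    push_cast
    ring

lemma tails_w (f w : ℕ → ℝ) (hpos : ∀ j, 0 ≤ f j) (hwpos : ∀ j, 0 ≤ w j)
    (hf : Summable f)
    (hmom : Summable (fun n => (∑ j ∈ range n, w j) * f n)) :
    Summable (fun j => w j * tl f (j+1)) ∧
      (∑' j, w j * tl f (j+1)) = ∑' n, (∑ j ∈ range n, w j) * f n := by
  have htail : ∀ j : ℕ, Summable (fun i => f (i + (j+1))) := fun j =>
    (summable_nat_add_iff (j+1)).2 hf
  have key : ∀ j : ℕ, ENNReal.ofReal (w j * tl f (j+1))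
      = ENNReal.ofReal (w j) * ∑' i, ENNReal.ofReal (f (i + (j+1))) := by
    intro j
    rw [ENNReal.ofReal_mul (hwpos j)]
    congr 1
    exact ENNReal.ofReal_tsum_of_nonneg (fun i => hpos _) (htail j)
  have key2 : ∀ n : ℕ, ENNReal.ofReal ((∑ j ∈ range n, w j) * f n)
      = (∑ j ∈ range n, ENNReal.ofReal (w j)) * ENNReal.ofReal (f n) := by
    intro n
    rw [ENNReal.ofReal_mul (Finset.sum_nonneg fun j _ => hwpos j)]
    congr 1
    exact ENNReal.ofReal_sum_of_nonneg (fun j _ => hwpos j)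
  have hmain : ∑' j, ENNReal.ofReal (w j * tl f (j+1))
      = ENNReal.ofReal (∑' n, (∑ j ∈ range n, w j) * f n) := by
    rw [tsum_congr key,
      fub (fun j => ENNReal.ofReal (w j)) (fun n => ENNReal.ofReal (f n)),
      ← tsum_congr key2,
      ← ENNReal.ofReal_tsum_of_nonneg
        (fun n => mul_nonneg (Finset.sum_nonneg fun j _ => hwpos j) (hpos n)) hmom]
  have hne : ∑' j, ENNReal.ofReal (w j * tl f (j+1)) ≠ ⊤ := by
    rw [hmain]; exact ENNReal.ofReal_ne_top
  have hnonneg : ∀ j, 0 ≤ w j * tl f (j+1) := fun j =>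
    mul_nonneg (hwpos j) (tl_nonneg f hpos (j+1))
  have hsummable : Summable (fun j => w j * tl f (j+1)) := by
    have := ENNReal.summable_toReal hne
    refine this.congr fun j => ?_
    rw [ENNReal.toReal_ofReal (hnonneg j)]
  refine ⟨hsummable, ?_⟩
  have := ENNReal.ofReal_tsum_of_nonneg hnonneg hsummable
  rw [hmain] at this
  have h1 : (0:ℝ) ≤ ∑' j, w j * tl f (j+1) := tsum_nonneg hnonneg
  have h2 : (0:ℝ) ≤ ∑' n, (∑ j ∈ range n, w j) * f n :=
    tsum_nonneg fun n => mul_nonneg (Finset.sum_nonneg fun j _ => hwpos j) (hpos n)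
  exact (ENNReal.ofReal_eq_ofReal_iff h1 h2).1 this

lemma chain_mono (Q : ℕ → ℝ) : ∀ n, (∀ m, m < n → Q m ≤ Q (m+1)) → ∀ m, m ≤ n → Q m ≤ Q n := by
  intro n
  induction n with
  | zero => intro _ m hm; simp [Nat.le_zero.1 hm]
  | succ n ih =>
    intro h m hm
    rcases eq_or_lt_of_le hm with rfl | h'
    · exact le_refl _
    · exact (ih (fun k hk => h k (by omega)) m (by omega)).trans (h n (by omega))

lemma bdd_div_tendsto (f : ℕ → ℝ) (C : ℝ) (h0 : ∀ n, 0 ≤ f n) (hC : ∀ n, f n ≤ C) :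
    Tendsto (fun n : ℕ => f n / n) atTop (𝓝 0) := by
  apply tendsto_of_tendsto_of_tendsto_of_le_of_le' tendsto_const_nhds
    (tendsto_const_div_atTop_nhds_zero_nat C)
  · filter_upwards with n
    exact div_nonneg (h0 n) (Nat.cast_nonneg n)
  · filter_upwards [eventually_ge_atTop 1] with n hn
    have hn' : (0:ℝ) < n := by exact_mod_cast hn
    exact (div_le_div_iff_of_pos_right hn').2 (hC n)

/-- Takács' theorem, critical case: if `γ₁ = 1` and `γ₂ = ∑ j(j-1)π_j < ∞`,
then `Q_k / k → 2Q₀ / γ₂`. -/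
theorem stmt_2 (pi Q : ℕ → ℝ)
    (hpos : ∀ j, 0 ≤ pi j) (hpi0 : 0 < pi 0) (hsum : HasSum pi 1)
    (hγ1 : (∑' j : ℕ, (j : ℝ) * pi j) = 1)
    (hγ2 : Summable (fun j : ℕ => (j : ℝ) * ((j : ℝ) - 1) * pi j))
    (hQ0 : 0 < Q 0)
    (hrec : ∀ k, Q k = ∑ j ∈ Finset.range (k + 1), pi j * Q (k - j + 1)) :
    Tendsto (fun k : ℕ => Q k / (k : ℝ)) atTop
      (nhds (2 * Q 0 / ∑' j : ℕ, (j : ℝ) * ((j : ℝ) - 1) * pi j)) := by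
  classical
  have hπ : Summable pi := hsum.summable
  have htot : ∑' j, pi j = 1 := hsum.tsum_eq
  have hmom1 : Summable (fun n : ℕ => (n:ℝ) * pi n) := by
    by_contra h
    rw [tsum_eq_zero_of_not_summable h] at hγ1
    norm_num at hγ1
  set γ₂ : ℝ := ∑' j : ℕ, (j : ℝ) * ((j : ℝ) - 1) * pi j with hγ₂def
  have hterm : ∀ j : ℕ, 0 ≤ (j:ℝ) * ((j:ℝ) - 1) * pi j := by
    intro j
    rcases Nat.eq_zero_or_pos j with h | h
    · simp [h]
    · have : (1:ℝ) ≤ (j:ℝ) := by exact_mod_cast h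
      have h1 : (0:ℝ) ≤ (j:ℝ) - 1 := by linarith
      exact mul_nonneg (mul_nonneg (Nat.cast_nonneg j) h1) (hpos j)
  -- γ₂ > 0
  have hg2pos : 0 < γ₂ := by
    have hex : ∃ m : ℕ, 2 ≤ m ∧ 0 < pi m := by
      by_contra h
      push_neg at h
      have hz : ∀ m : ℕ, 2 ≤ m → pi m = 0 := fun m hm => le_antisymm (h m hm) (hpos m)
      have e1 : ∑' j, pi j = ∑ j ∈ range 2, pi j :=
        tsum_eq_sum (fun b hb => hz b (by simp at hb; omega))
      have e2 : ∑' j : ℕ, (j:ℝ) * pi j = ∑ j ∈ range 2, (j:ℝ) * pi j :=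
        tsum_eq_sum (fun b hb => by rw [hz b (by simp at hb; omega)]; ring)
      rw [htot] at e1
      rw [hγ1] at e2
      simp [Finset.sum_range_succ] at e1 e2
      linarith
    obtain ⟨m, hm2, hmpos⟩ := hex
    have hle : (m:ℝ) * ((m:ℝ) - 1) * pi m ≤ γ₂ := Summable.le_tsum hγ2 m (fun j _ => hterm j)
    have : (0:ℝ) < (m:ℝ) * ((m:ℝ) - 1) * pi m := by
      have h2 : (2:ℝ) ≤ (m:ℝ) := by exact_mod_cast hm2
      have h3 : (0:ℝ) < (m:ℝ) - 1 := by linarith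
      have h4 : (0:ℝ) < (m:ℝ) := by linarith
      exact mul_pos (mul_pos h4 h3) hmpos
    linarith
  -- tails
  set r : ℕ → ℝ := fun j => tl pi (j+1) with hrdef
  set T : ℕ → ℝ := fun k => tl r (k+1) with hTdef
  have hrnn : ∀ j, 0 ≤ r j := fun j => tl_nonneg pi hpos (j+1)
  -- applications of tails_w
  obtain ⟨hrsum0, hrval0⟩ := tails_w pi (fun _ => (1:ℝ)) hpos (fun _ => zero_le_one) hπ
    (by simpa using hmom1)
  have hrsum : Summable r := hrsum0.congr (fun j => by simp [hrdef])
  have hrval : ∑' j, r j = 1 := by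
    have e1 : ∑' j, r j = ∑' j, (1:ℝ) * tl pi (j+1) := tsum_congr (fun j => by simp [hrdef])
    have e2 : ∑' n : ℕ, (∑ _j ∈ range n, (1:ℝ)) * pi n = ∑' n : ℕ, (n:ℝ) * pi n :=
      tsum_congr (fun n => by simp)
    rw [e1, hrval0, e2, hγ1]
  have hmom2 : Summable (fun n : ℕ => (∑ j ∈ range n, (j:ℝ)) * pi n) := by
    refine (hγ2.mul_left (1/2)).congr fun n => ?_
    rw [gauss]
    ring
  obtain ⟨hidsum0, hidval0⟩ := tails_w pi (fun j => (j:ℝ)) hpos (fun j => Nat.cast_nonneg j) hπ hmom2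
  have hidsum : Summable (fun n : ℕ => (n:ℝ) * r n) := hidsum0
  have hidval : ∑' n : ℕ, (n:ℝ) * r n = γ₂ / 2 := by
    rw [hidval0]
    have e2 : ∑' n : ℕ, (∑ j ∈ range n, (j:ℝ)) * pi n
        = ∑' n : ℕ, (1/2) * ((n:ℝ) * ((n:ℝ)-1) * pi n) :=
      tsum_congr (fun n => by rw [gauss]; ring)
    rw [e2, tsum_mul_left, hγ₂def]
    ring
  obtain ⟨hTsum0, hTval0⟩ := tails_w r (fun _ => (1:ℝ)) hrnn (fun _ => zero_le_one) hrsum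
    (by simpa using hidsum)
  have hTsum : Summable T := hTsum0.congr (fun k => by simp [hTdef])
  have hTval : ∑' k, T k = γ₂ / 2 := by
    have e1 : ∑' k, T k = ∑' k, (1:ℝ) * tl r (k+1) := tsum_congr (fun k => by simp [hTdef])
    have e2 : ∑' n : ℕ, (∑ _j ∈ range n, (1:ℝ)) * r n = ∑' n : ℕ, (n:ℝ) * r n :=
      tsum_congr (fun n => by simp)
    rw [e1, hTval0, e2, hidval]
  have hTnn : ∀ k, 0 ≤ T k := fun k => tl_nonneg r hrnn (k+1)
  have hrstep : ∀ j, r j = pi (j+1) + r (j+1) := fun j => tl_step pi hπ (j+1)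
  have hTstep : ∀ k, T k = r (k+1) + T (k+1) := fun k => tl_step r hrsum (k+1)
  have hr0 : r 0 = 1 - pi 0 := by
    show tl pi 1 = 1 - pi 0
    rw [tl_eq pi hπ 1, htot]
    simp
  have hr1 : r 1 = 1 - pi 0 - pi 1 := by
    show tl pi 2 = 1 - pi 0 - pi 1
    rw [tl_eq pi hπ 2, htot, Finset.sum_range_succ, Finset.sum_range_one]
    ring
  have hT0 : T 0 = pi 0 := by
    show tl r 1 = pi 0
    rw [tl_eq r hrsum 1, hrval, Finset.sum_range_one, hr0]
    ring
  -- partial sums of pi bounded by 1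
  have hPle : ∀ n, ∑ j ∈ range n, pi j ≤ 1 := by
    intro n
    rw [← htot]
    exact Summable.sum_le_tsum (range n) (fun j _ => hpos j) hπ
  have hPnn : ∀ n, (0:ℝ) ≤ ∑ j ∈ range n, pi j := fun n => Finset.sum_nonneg fun j _ => hpos j
  -- monotonicity of Q
  have hmono : ∀ n, Q n ≤ Q (n+1) := by
    intro n
    induction n using Nat.strong_induction_on with
    | _ n ih =>
    have hloc : ∀ m, m ≤ n → Q m ≤ Q n := chain_mono Q n ih
    have hQ0n : Q 0 ≤ Q n := hloc 0 (Nat.zero_le n)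
    have hQnn : (0:ℝ) ≤ Q n := le_trans (le_of_lt hQ0) hQ0n
    have hsplit : Q n = (∑ j ∈ range n, pi (j+1) * Q (n - (j+1) + 1)) + pi 0 * Q (n + 1) := by
      rw [hrec n, Finset.sum_range_succ']
      simp
    have hS : ∑ j ∈ range n, pi (j+1) * Q (n - (j+1) + 1) ≤ (1 - pi 0) * Q n := by
      calc ∑ j ∈ range n, pi (j+1) * Q (n - (j+1) + 1)
          ≤ ∑ j ∈ range n, pi (j+1) * Q n := by
            refine Finset.sum_le_sum fun j hj => ?_
            refine mul_le_mul_of_nonneg_left ?_ (hpos (j+1))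
            have hj' : j < n := mem_range.1 hj
            exact hloc _ (by omega)
        _ = (∑ j ∈ range n, pi (j+1)) * Q n := by rw [Finset.sum_mul]
        _ ≤ (1 - pi 0) * Q n := by
            refine mul_le_mul_of_nonneg_right ?_ hQnn
            have := hPle (n+1)
            rw [Finset.sum_range_succ'] at this
            simpa using by linarith [this]
    have : pi 0 * Q n ≤ pi 0 * Q (n+1) := by
      have := hsplit
      nlinarith [hS]
    exact le_of_mul_le_mul_left this hpi0
  have hQmono : Monotone Q := monotone_nat_of_le_succ hmono
  have hQge : ∀ n, Q 0 ≤ Q n := fun n => hQmono (Nat.zero_le n)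
  have hQnn : ∀ n, (0:ℝ) ≤ Q n := fun n => le_trans hQ0.le (hQge n)
  -- increments
  set pd : ℕ → ℝ := fun m => if m = 0 then 0 else Q (m-1) with hpddef
  set d : ℕ → ℝ := fun m => Q m - pd m with hddef
  have hd0 : d 0 = Q 0 := by simp [hddef, hpddef]
  have hdsucc : ∀ k, d (k+1) = Q (k+1) - Q k := fun k => by simp [hddef, hpddef]
  have hdnn : ∀ m, 0 ≤ d m := by
    intro m
    cases m with
    | zero => rw [hd0]; exact hQ0.le
    | succ k => rw [hdsucc]; exact sub_nonneg.2 (hmono k)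
  have hdsum : ∀ N, ∑ m ∈ range (N+1), d m = Q N := by
    intro N
    induction N with
    | zero => simp [hd0]
    | succ N ih => rw [Finset.sum_range_succ, ih, hdsucc]; ring
  -- the key identity
  have hkey : ∀ n, ∑ m ∈ range (n+1), d m * T (n - m) = Q 0 * ∑ j ∈ range (n+1), pi j := by
    intro n
    induction n with
    | zero => simp [hd0, hT0]
    | succ n ih =>
      -- expand LHS
      have e1 : ∑ m ∈ range (n+2), d m * T (n+1-m)
          = (∑ m ∈ range (n+1), d m * T (n+1-m)) + d (n+1) * T 0 := by
        rw [Finset.sum_range_succ]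
        simp
      have e2 : ∑ m ∈ range (n+1), d m * T (n+1-m)
          = ∑ m ∈ range (n+1), (d m * T (n-m) - d m * r (n-m+1)) := by
        refine Finset.sum_congr rfl fun m hm => ?_
        have hm' : m ≤ n := by simpa [Nat.lt_succ_iff] using hm
        have : T (n+1-m) = T (n-m) - r (n-m+1) := by
          have := hTstep (n-m)
          rw [show n+1-m = n-m+1 from by omega]
          linarith
        rw [this]
        ring
      -- the convolution term A
      have hA : ∑ m ∈ range (n+1), d m * r (n-m+1)
          = Q n * r 1 - ∑ m ∈ range n, Q m * pi (n-m+1) := by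
        -- split d into Q minus shifted Q
        have hsplitd : ∀ m ∈ range (n+1), d m * r (n-m+1)
            = Q m * r (n-m+1) - pd m * r (n-m+1) := by
          intro m _
          rw [hddef]
          ring
        rw [Finset.sum_congr rfl hsplitd, Finset.sum_sub_distrib]
        have hA2 : ∑ m ∈ range (n+1), pd m * r (n-m+1)
            = ∑ m ∈ range n, Q m * r (n-m) := by
          rw [Finset.sum_range_succ']
          simp only [hpddef, if_pos rfl, zero_mul, add_zero]
          refine Finset.sum_congr rfl fun i hi => ?_
          have hi' : i < n := mem_range.1 hi
          rw [if_neg (Nat.succ_ne_zero i), show n - (i+1) + 1 = n - i from by omega]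
          simp
        have hA1 : ∑ m ∈ range (n+1), Q m * r (n-m+1)
            = (∑ m ∈ range n, Q m * r (n-m+1)) + Q n * r 1 := by
          rw [Finset.sum_range_succ]
          simp
        rw [hA1, hA2]
        have : ∑ m ∈ range n, Q m * r (n-m+1) - ∑ m ∈ range n, Q m * r (n-m)
            = - ∑ m ∈ range n, Q m * pi (n-m+1) := by
          rw [← Finset.sum_sub_distrib, ← Finset.sum_neg_distrib]
          refine Finset.sum_congr rfl fun m hm => ?_
          have := hrstep (n-m)
          have hrw : r (n-m) = pi (n-m+1) + r (n-m+1) := this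
          rw [hrw]
          ring
        linarith [this]
      -- the recurrence, rearranged
      have hrecn : pi 0 * Q (n+1) = Q n - ∑ j ∈ range n, pi (j+1) * Q (n-j) := by
        have := hrec n
        rw [Finset.sum_range_succ'] at this
        have e : ∑ j ∈ range n, pi (j+1) * Q (n - (j+1) + 1) = ∑ j ∈ range n, pi (j+1) * Q (n-j) := by
          refine Finset.sum_congr rfl fun j hj => ?_
          have hj' : j < n := mem_range.1 hj
          rw [show n - (j+1) + 1 = n - j from by omega]
        rw [e] at this
        simp only [Nat.sub_zero] at this
        linarith [this]
      -- relation between B and C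
      have hBC : (∑ j ∈ range n, pi (j+1) * Q (n-j)) + pi (n+1) * Q 0
          = (∑ m ∈ range n, Q m * pi (n-m+1)) + pi 1 * Q n := by
        have hL : ∑ j ∈ range (n+1), pi (j+1) * Q (n-j)
            = (∑ j ∈ range n, pi (j+1) * Q (n-j)) + pi (n+1) * Q 0 := by
          rw [Finset.sum_range_succ]
          simp
        have hR : ∑ j ∈ range (n+1), pi (j+1) * Q (n-j)
            = (∑ j ∈ range n, pi (j+2) * Q (n-(j+1))) + pi 1 * Q n := by
          rw [Finset.sum_range_succ']
          simp
        have hC : ∑ m ∈ range n, Q m * pi (n-m+1) = ∑ j ∈ range n, pi (j+2) * Q (n-(j+1)) := by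
          rw [← Finset.sum_range_reflect]
          refine Finset.sum_congr rfl fun j hj => ?_
          have hj' : j < n := mem_range.1 hj
          rw [show n - 1 - j = n - (j+1) from by omega,
            show n - (n - (j+1)) + 1 = j + 2 from by omega]
          ring
        rw [hC, ← hR, hL]
      -- put it together
      rw [e1, e2, Finset.sum_sub_distrib, ih, hA, hT0, Finset.sum_range_succ _ (n+1), hdsucc]
      have hr1' : r 1 = 1 - pi 0 - pi 1 := hr1
      linear_combination hrecn - hBC - Q n * hr1'
  -- endgame
  set μ : ℝ := γ₂ / 2 with hμdef
  have hμpos : 0 < μ := by rw [hμdef]; linarith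
  have hμne : μ ≠ 0 := ne_of_gt hμpos
  set σ : ℕ → ℝ := fun t => ∑ k ∈ range (t+1), T k with hσdef
  set τ : ℕ → ℝ := fun t => tl T (t+1) with hτdef
  have hτeq : ∀ t, τ t = μ - σ t := by
    intro t
    rw [hτdef]
    simp only []
    rw [tl_eq T hTsum (t+1), hTval, hσdef]
  have hτnn : ∀ t, 0 ≤ τ t := fun t => tl_nonneg T hTnn (t+1)
  have hσnn : ∀ t, 0 ≤ σ t := fun t => Finset.sum_nonneg fun k _ => hTnn k
  have hτle : ∀ t, τ t ≤ μ := fun t => by rw [hτeq t]; linarith [hσnn t]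
  have hσ0 : σ 0 = T 0 := by rw [hσdef]; simp
  -- summed identity
  have hI : ∀ N, ∑ n ∈ range (N+1), (Q 0 * ∑ j ∈ range (n+1), pi j)
      = ∑ m ∈ range (N+1), d m * σ (N - m) := by
    intro N
    induction N with
    | zero =>
      have h := hkey 0
      simp only [zero_add, Finset.sum_range_one, Nat.sub_zero] at h ⊢
      rw [hσ0, ← h]
    | succ N ih =>
      have s1 : ∑ m ∈ range (N+2), d m * σ (N+1-m)
          = (∑ m ∈ range (N+1), d m * σ (N+1-m)) + d (N+1) * σ 0 := by
        rw [Finset.sum_range_succ]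
        simp
      have s2 : ∑ m ∈ range (N+1), d m * σ (N+1-m)
          = ∑ m ∈ range (N+1), (d m * σ (N-m) + d m * T (N+1-m)) := by
        refine Finset.sum_congr rfl fun m hm => ?_
        have hm' : m ≤ N := by simpa [Nat.lt_succ_iff] using hm
        have hσs : σ (N+1-m) = σ (N-m) + T (N+1-m) := by
          rw [show N+1-m = (N-m)+1 from by omega, hσdef]
          simp only []
          rw [Finset.sum_range_succ]
        rw [hσs]
        ring
      have s3 : ∑ m ∈ range (N+2), d m * T (N+1-m)
          = (∑ m ∈ range (N+1), d m * T (N+1-m)) + d (N+1) * T 0 := by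
        rw [Finset.sum_range_succ]
        simp
      rw [Finset.sum_range_succ _ (N+1), ih, s1, s2, Finset.sum_add_distrib]
      have h := hkey (N+1)
      rw [s3] at h
      rw [hσ0]
      linarith [h]
  have hEnn : ∀ N, 0 ≤ ∑ m ∈ range (N+1), d m * τ (N-m) :=
    fun N => Finset.sum_nonneg fun m _ => mul_nonneg (hdnn m) (hτnn _)
  have hmain : ∀ N, μ * Q N = (∑ n ∈ range (N+1), Q 0 * ∑ j ∈ range (n+1), pi j)
      + ∑ m ∈ range (N+1), d m * τ (N-m) := by
    intro N
    have h1 : ∑ m ∈ range (N+1), d m * σ (N-m)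
        = (∑ m ∈ range (N+1), d m) * μ - ∑ m ∈ range (N+1), d m * τ (N-m) := by
      rw [Finset.sum_mul, ← Finset.sum_sub_distrib]
      refine Finset.sum_congr rfl fun m _ => ?_
      rw [hτeq]
      ring
    have h2 := hI N
    rw [h1, hdsum N] at h2
    linarith [h2]
  -- bound on increments
  have hdub : ∀ m, d m ≤ Q 0 / pi 0 := by
    intro m
    have h1 : d m * T 0 ≤ ∑ k ∈ range (m+1), d k * T (m-k) := by
      have := Finset.single_le_sum (f := fun k => d k * T (m-k))
        (fun k _ => mul_nonneg (hdnn k) (hTnn _)) (Finset.self_mem_range_succ m)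
      simpa [Nat.sub_self] using this
    rw [hkey m] at h1
    have h2 : Q 0 * ∑ j ∈ range (m+1), pi j ≤ Q 0 := by
      have := mul_le_mul_of_nonneg_left (hPle (m+1)) hQ0.le
      simpa using this
    rw [le_div_iff₀ hpi0, ← hT0]
    linarith
  -- limits
  have hPtend : Tendsto (fun n => ∑ j ∈ range (n+1), pi j) atTop (𝓝 1) :=
    hsum.tendsto_sum_nat.comp (tendsto_add_atTop_nat 1)
  have hσtend : Tendsto σ atTop (𝓝 μ) := by
    have h := hTsum.hasSum.tendsto_sum_nat.comp (tendsto_add_atTop_nat 1)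
    rw [hTval] at h
    exact h
  have hτtend : Tendsto τ atTop (𝓝 0) := by
    have : Tendsto (fun t => μ - σ t) atTop (𝓝 (μ - μ)) := tendsto_const_nhds.sub hσtend
    rw [sub_self] at this
    exact this.congr fun t => (hτeq t).symm
  have hcesP : Tendsto (fun N : ℕ => (N:ℝ)⁻¹ • ∑ n ∈ range N, (∑ j ∈ range (n+1), pi j))
      atTop (𝓝 1) := hPtend.cesaro
  have hcesτ : Tendsto (fun N : ℕ => (N:ℝ)⁻¹ • ∑ t ∈ range N, τ t) atTop (𝓝 0) := hτtend.cesaro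
  -- SP N / N → 1
  have hSP : Tendsto (fun N : ℕ => (∑ n ∈ range (N+1), ∑ j ∈ range (n+1), pi j) / (N:ℝ))
      atTop (𝓝 1) := by
    have hdec : ∀ N : ℕ, (∑ n ∈ range (N+1), ∑ j ∈ range (n+1), pi j) / (N:ℝ)
        = (N:ℝ)⁻¹ • (∑ n ∈ range N, ∑ j ∈ range (n+1), pi j)
          + (∑ j ∈ range (N+1), pi j) / (N:ℝ) := by
      intro N
      rw [Finset.sum_range_succ, smul_eq_mul, inv_mul_eq_div, add_div]
    have h2 : Tendsto (fun N : ℕ => (∑ j ∈ range (N+1), pi j) / (N:ℝ)) atTop (𝓝 0) :=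
      bdd_div_tendsto _ 1 (fun n => hPnn (n+1)) (fun n => hPle (n+1))
    have := hcesP.add h2
    rw [add_zero] at this
    exact (this.congr fun N => (hdec N).symm)
  -- E N / N → 0
  have hτsum_le : ∀ N : ℕ, ∑ m ∈ range (N+1), d m * τ (N-m)
      ≤ (Q 0 / pi 0) * ∑ t ∈ range (N+1), τ t := by
    intro N
    have h1 : ∑ m ∈ range (N+1), d m * τ (N-m) ≤ ∑ m ∈ range (N+1), (Q 0 / pi 0) * τ (N-m) :=
      Finset.sum_le_sum fun m _ => mul_le_mul_of_nonneg_right (hdub m) (hτnn _)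
    have h2 : ∑ m ∈ range (N+1), τ (N-m) = ∑ t ∈ range (N+1), τ t := by
      have := Finset.sum_range_reflect (fun t => τ t) (N+1)
      simpa using this
    rw [← Finset.mul_sum, h2] at h1
    exact h1
  have hcesτ' : Tendsto (fun N : ℕ => (∑ t ∈ range (N+1), τ t) / (N:ℝ)) atTop (𝓝 0) := by
    have hdec : ∀ N : ℕ, (∑ t ∈ range (N+1), τ t) / (N:ℝ)
        = (N:ℝ)⁻¹ • (∑ t ∈ range N, τ t) + τ N / (N:ℝ) := by
      intro N
      rw [Finset.sum_range_succ, smul_eq_mul, inv_mul_eq_div, add_div]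
    have h2 : Tendsto (fun N : ℕ => τ N / (N:ℝ)) atTop (𝓝 0) :=
      bdd_div_tendsto _ μ hτnn hτle
    have := hcesτ.add h2
    rw [add_zero] at this
    exact (this.congr fun N => (hdec N).symm)
  have hE : Tendsto (fun N : ℕ => (∑ m ∈ range (N+1), d m * τ (N-m)) / (N:ℝ)) atTop (𝓝 0) := by
    have hub : Tendsto (fun N : ℕ => (Q 0 / pi 0) * ((∑ t ∈ range (N+1), τ t) / (N:ℝ)))
        atTop (𝓝 0) := by
      have := hcesτ'.const_mul (Q 0 / pi 0)
      rwa [mul_zero] at this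
    apply tendsto_of_tendsto_of_tendsto_of_le_of_le' tendsto_const_nhds hub
    · filter_upwards with N
      exact div_nonneg (hEnn N) (Nat.cast_nonneg N)
    · filter_upwards [eventually_ge_atTop 1] with N hN
      have hN' : (0:ℝ) < N := by exact_mod_cast hN
      calc (∑ m ∈ range (N+1), d m * τ (N-m)) / (N:ℝ)
          ≤ ((Q 0 / pi 0) * ∑ t ∈ range (N+1), τ t) / (N:ℝ) :=
            (div_le_div_iff_of_pos_right hN').2 (hτsum_le N)
        _ = (Q 0 / pi 0) * ((∑ t ∈ range (N+1), τ t) / (N:ℝ)) := by ring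
  -- combine
  have hfinal : Tendsto (fun N : ℕ => Q N / (N:ℝ)) atTop (𝓝 (Q 0 / μ)) := by
    have hcomb : Tendsto (fun N : ℕ =>
        (Q 0 * ((∑ n ∈ range (N+1), ∑ j ∈ range (n+1), pi j) / (N:ℝ))
          + (∑ m ∈ range (N+1), d m * τ (N-m)) / (N:ℝ)) / μ)
        atTop (𝓝 ((Q 0 * 1 + 0) / μ)) := ((hSP.const_mul (Q 0)).add hE).div_const μ
    rw [mul_one, add_zero] at hcomb
    refine hcomb.congr' ?_
    filter_upwards [eventually_ge_atTop 1] with N hN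
    have hN' : (0:ℝ) < N := by exact_mod_cast hN
    have hm := hmain N
    have hsum' : ∑ n ∈ range (N+1), (Q 0 * ∑ j ∈ range (n+1), pi j)
        = Q 0 * ∑ n ∈ range (N+1), ∑ j ∈ range (n+1), pi j := by
      rw [Finset.mul_sum]
    rw [hsum'] at hm
    calc (Q 0 * ((∑ n ∈ range (N+1), ∑ j ∈ range (n+1), pi j) / (N:ℝ))
          + (∑ m ∈ range (N+1), d m * τ (N-m)) / (N:ℝ)) / μ
        = ((Q 0 * ∑ n ∈ range (N+1), ∑ j ∈ range (n+1), pi j)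
            + ∑ m ∈ range (N+1), d m * τ (N-m)) / (N:ℝ) / μ := by
          rw [← mul_div_assoc, ← add_div]
      _ = (μ * Q N) / (N:ℝ) / μ := by rw [← hm]
      _ = Q N / (N:ℝ) := by rw [div_right_comm, mul_div_cancel_left₀ _ hμne]
  have : Q 0 / μ = 2 * Q 0 / γ₂ := by
    rw [hμdef, div_div_eq_mul_div]
    ring
  rw [this] at hfinal
  exact hfinal
end
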